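/- arXiv:1505.08121 — 2 statements merged into one kernel-verified Lean document; each statement's English description precedes it below -/
import Mathlib

section
/- For every integer m ≥ 3, the lexicographic product C_m[4] admits a 2-factorization into four C_m-factors, i.e., four spanning subgraphs each of which is a vertex-disjoint union of four cycles of length m. -/
open SimpleGraph

/-- `F` is a decomposition of the graph `G` into edge-disjoint subgraphs. -/
def IsDecompositionF {V : Type*} {n : ℕ} (G : SimpleGraph V) (F : Fin n → SimpleGraph V) : Prop :=
  (∀ i, F i ≤ G) ∧ (∀ i j, i ≠ j → F i ⊓ F j = ⊥) ∧ (⨆ i, F i) = G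

/-- `H` is a `C_k`-factor of `G`: a spanning 2-regular subgraph all of whose
connected components have `k` vertices (hence are `k`-cycles). -/
def IsCnFactor {V : Type*} (G H : SimpleGraph V) (k : ℕ) : Prop :=
  H ≤ G ∧ (∀ v, (H.neighborSet v).ncard = 2) ∧
    ∀ v, (H.connectedComponentMk v).supp.ncard = k

/-- `H` is a perfect matching (1-factor) of `G`. -/
def IsPM {V : Type*} (G H : SimpleGraph V) : Prop :=
  H ≤ G ∧ ∀ v, (H.neighborSet v).ncard = 1

/-- The lexicographic blow-up `C_m[4]`: the Cayley graph on `ZMod 4 × ZMod m`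
with connection set `ZMod 4 × {1, -1}`. -/
def Cm4 (m : ℕ) : SimpleGraph (ZMod 4 × ZMod m) :=
  SimpleGraph.fromRel (fun u v => v.2 - u.2 = 1)

/-- The blow-up `G[k]`: replace every vertex by `k` independent vertices. -/
def blowup {V : Type*} (G : SimpleGraph V) (k : ℕ) : SimpleGraph (V × Fin k) where
  Adj u v := G.Adj u.1 v.1
  symm := ⟨by intro _ _ h; exact G.adj_symm h⟩
  loopless := ⟨by intro u h; exact G.irrefl h⟩

abbrev A4 : Type := ZMod 2 × ZMod 2

def al : A4 → A4 := fun a => (a.2, a.1 + a.2)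

def alE : A4 ≃ A4 := ⟨al, al ∘ al, by decide, by decide⟩

def ee : ZMod 4 ≃ A4 :=
  ⟨fun x => ((x.val : ZMod 2), ((x.val / 2 : ℕ) : ZMod 2)),
   fun a => ((a.1.val + 2 * a.2.val : ℕ) : ZMod 4), by decide, by decide⟩

def dd : Fin 4 → A4 := ![(0,0),(1,0),(0,1),(1,1)]

lemma dd_inj : Function.Injective dd := by decide
lemma dd_surj : Function.Surjective dd := by decide

def sel (m : ℕ) (i : ZMod m) : A4 ≃ A4 :=
  if m % 2 = 1 ∧ i.val = 1 then alE
  else if m % 2 = 1 ∧ i.val = 2 then alE.trans alE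
  else Equiv.refl A4

lemma addself : ∀ y : A4, y + y = 0 := by decide

lemma sel_sum (m : ℕ) (hm : 3 ≤ m) (x : A4) :
    ∑ t ∈ Finset.range m, sel m ((t : ZMod m)) x = 0 := by
  haveI : NeZero m := ⟨by omega⟩
  have hcongr : ∀ t ∈ Finset.range m,
      sel m ((t : ZMod m)) x
        = x + ((if t = 1 then (if m % 2 = 1 then x + al x else 0) else 0)
             + (if t = 2 then (if m % 2 = 1 then x + al (al x) else 0) else 0)) := by
    intro t ht
    have hv : ((t : ZMod m)).val = t := ZMod.val_cast_of_lt (Finset.mem_range.mp ht)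
    unfold sel
    rw [hv]
    split_ifs <;> first | omega | (revert x; decide)
  rw [Finset.sum_congr rfl hcongr]
  rw [Finset.sum_add_distrib, Finset.sum_add_distrib, Finset.sum_const, Finset.card_range]
  rw [Finset.sum_ite_eq' (Finset.range m) 1 (fun _ => (if m % 2 = 1 then x + al x else 0))]
  rw [Finset.sum_ite_eq' (Finset.range m) 2 (fun _ => (if m % 2 = 1 then x + al (al x) else 0))]
  have h1m : (1 : ℕ) ∈ Finset.range m := Finset.mem_range.mpr (by omega)
  have h2m : (2 : ℕ) ∈ Finset.range m := Finset.mem_range.mpr (by omega)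
  rw [if_pos h1m, if_pos h2m]
  rcases eq_or_ne (m % 2) 1 with hp | hp
  · rw [if_pos hp, if_pos hp]
    have hsm : m • x = x := by
      have hms : m = 2 * (m / 2) + 1 := by omega
      rw [hms, add_nsmul, mul_nsmul, one_nsmul, two_nsmul, addself, smul_zero, zero_add]
    rw [hsm]
    exact (by decide : ∀ y : A4, y + (y + al y + (y + al (al y))) = 0) x
  · rw [if_neg hp, if_neg hp]
    have hsm : m • x = 0 := by
      have hms : m = 2 * (m / 2) := by omega
      rw [hms, mul_nsmul, two_nsmul, addself, smul_zero]
    rw [hsm]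
    simp

def Pp (m : ℕ) (c : Fin 4) (j : ZMod m) : A4 :=
  ∑ t ∈ Finset.range j.val, sel m (t : ZMod m) (dd c)

lemma cast_val (m : ℕ) [NeZero m] (i : ZMod m) : ((i.val : ℕ) : ZMod m) = i := by
  simp [ZMod.natCast_val, ZMod.cast_id]

lemma Pp_step (m : ℕ) (hm : 3 ≤ m) (c : Fin 4) (i : ZMod m) :
    Pp m c (i + 1) = Pp m c i + sel m i (dd c) := by
  haveI : NeZero m := ⟨by omega⟩
  haveI : Fact (1 < m) := ⟨by omega⟩
  have hlt : i.val < m := ZMod.val_lt i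
  by_cases h : i.val + 1 < m
  · have hv : (i + 1).val = i.val + 1 := by
      rw [ZMod.val_add, ZMod.val_one, Nat.mod_eq_of_lt h]
    rw [Pp, hv, Finset.sum_range_succ, cast_val]
    rfl
  · have hieq : i.val + 1 = m := by omega
    have h0 : i + 1 = 0 := by
      have : ((i.val + 1 : ℕ) : ZMod m) = 0 := by rw [hieq, ZMod.natCast_self]
      rwa [Nat.cast_add, Nat.cast_one, cast_val] at this
    rw [h0]
    have : Pp m c i + sel m i (dd c) = ∑ t ∈ Finset.range m, sel m (t : ZMod m) (dd c) := by
      rw [show Finset.range m = Finset.range (i.val+1) from by rw [hieq], Finset.sum_range_succ, Pp, cast_val]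
    rw [this, sel_sum m hm]
    simp [Pp, ZMod.val_zero]

def Fac (m : ℕ) (c : Fin 4) : SimpleGraph (ZMod 4 × ZMod m) :=
  SimpleGraph.fromRel (fun u v => v.2 - u.2 = 1 ∧ ee v.1 = ee u.1 + sel m u.2 (dd c))

lemma Fac_le (m : ℕ) (c : Fin 4) : Fac m c ≤ Cm4 m := by
  intro u v h
  simp only [Fac, Cm4, fromRel_adj] at *
  tauto

def Phi (m : ℕ) (c : Fin 4) (x : ZMod 4 × ZMod m) : A4 := ee x.1 + Pp m c x.2

lemma phi_adj (m : ℕ) (hm : 3 ≤ m) (c : Fin 4) {u v : ZMod 4 × ZMod m}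
    (h : (Fac m c).Adj u v) : Phi m c u = Phi m c v := by
  have key : ∀ w z : ZMod 4 × ZMod m,
      (z.2 - w.2 = 1 ∧ ee z.1 = ee w.1 + sel m w.2 (dd c)) → Phi m c w = Phi m c z := by
    intro w z ⟨h1, h2⟩
    have hz2 : z.2 = w.2 + 1 := by rw [← h1]; ring
    rw [Phi, Phi, h2, hz2, Pp_step m hm c]
    have : ∀ a p s : A4, a + s + (p + s) = a + p + (s + s) := by intros; abel
    rw [this, addself _]
    abel
  rcases h.2 with h' | h'
  · exact key u v h'
  · exact (key v u h').symm

lemma zmod_one_ne_zero (m : ℕ) (hm : 3 ≤ m) : (1 : ZMod m) ≠ 0 := by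
  haveI : NeZero m := ⟨by omega⟩
  haveI : Fact (1 < m) := ⟨by omega⟩
  intro h
  have := congrArg ZMod.val h
  rw [ZMod.val_one, ZMod.val_zero] at this
  omega

lemma reach (m : ℕ) (hm : 3 ≤ m) (c : Fin 4) (k : A4) (n : ℕ) :
    (Fac m c).Reachable (ee.symm k, (0 : ZMod m))
      (ee.symm (k + Pp m c (n : ZMod m)), (n : ZMod m)) := by
  haveI : NeZero m := ⟨by omega⟩
  induction n with
  | zero =>
      have : Pp m c ((0 : ℕ) : ZMod m) = 0 := by
        simp [Pp, ZMod.val_zero]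
      rw [this, add_zero, Nat.cast_zero]
  | succ n ih =>
      refine ih.trans (SimpleGraph.Adj.reachable ?_)
      have hcast : ((n + 1 : ℕ) : ZMod m) = (n : ZMod m) + 1 := by push_cast; ring
      rw [hcast]
      simp only [Fac, fromRel_adj]
      constructor
      · intro hcontra
        have := congrArg Prod.snd hcontra
        simp only at this
        exact zmod_one_ne_zero m hm (by
          have := this
          nth_rewrite 1 [← add_zero ((n : ZMod m))] at this
          exact (add_left_cancel this).symm)
      · left
        constructor
        · ring
        · rw [Equiv.apply_symm_apply, Equiv.apply_symm_apply, Pp_step m hm c]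
          abel

lemma phi_of_mem (m : ℕ) (hm : 3 ≤ m) (c : Fin 4) {u v : ZMod 4 × ZMod m}
    (h : (Fac m c).Reachable u v) : Phi m c u = Phi m c v := by
  obtain ⟨w⟩ := h
  induction w with
  | nil => rfl
  | cons h p ih => exact (phi_adj m hm c h).trans ih

lemma vertex_form (m : ℕ) (hm : 3 ≤ m) (c : Fin 4) (x : ZMod 4 × ZMod m) :
    x = (ee.symm (Phi m c x + Pp m c x.2), x.2) := by
  have : Phi m c x + Pp m c x.2 = ee x.1 := by
    rw [Phi]
    have : ∀ a p : A4, a + p + p = a + (p + p) := by intros; abel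
    rw [this, addself, add_zero]
  rw [this, Equiv.symm_apply_apply]

lemma reach_iff (m : ℕ) (hm : 3 ≤ m) (c : Fin 4) (u v : ZMod 4 × ZMod m) :
    (Fac m c).Reachable u v ↔ Phi m c u = Phi m c v := by
  haveI : NeZero m := ⟨by omega⟩
  constructor
  · exact phi_of_mem m hm c
  · intro h
    have ru : (Fac m c).Reachable (ee.symm (Phi m c u), (0 : ZMod m)) u := by
      have := reach m hm c (Phi m c u) u.2.val
      rw [cast_val] at this
      exact this.trans (by rw [← vertex_form m hm c u])
    have rv : (Fac m c).Reachable (ee.symm (Phi m c v), (0 : ZMod m)) v := by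
      have := reach m hm c (Phi m c v) v.2.val
      rw [cast_val] at this
      exact this.trans (by rw [← vertex_form m hm c v])
    rw [h] at ru
    exact ru.symm.trans rv

lemma supp_eq (m : ℕ) (hm : 3 ≤ m) (c : Fin 4) (v : ZMod 4 × ZMod m) :
    ((Fac m c).connectedComponentMk v).supp
      = (fun j : ZMod m => ((ee.symm (Phi m c v + Pp m c j), j) : ZMod 4 × ZMod m)) '' Set.univ := by
  ext x
  simp only [SimpleGraph.ConnectedComponent.mem_supp_iff, SimpleGraph.ConnectedComponent.eq,
    Set.image_univ, Set.mem_range]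
  constructor
  · intro h
    refine ⟨x.2, ?_⟩
    have hphi : Phi m c x = Phi m c v := phi_of_mem m hm c h
    rw [← hphi]
    exact (vertex_form m hm c x).symm
  · rintro ⟨j, rfl⟩
    rw [reach_iff m hm c]
    simp only [Phi, Equiv.apply_symm_apply]
    have : ∀ a p : A4, a + p + p = a := by
      intros a p
      have : ∀ a p : A4, a + p + p = a + (p + p) := by intros; abel
      rw [this, addself, add_zero]
    rw [this]

lemma zmod_two_ne_zero (m : ℕ) (hm : 3 ≤ m) : (2 : ZMod m) ≠ 0 := by
  haveI : NeZero m := ⟨by omega⟩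
  intro h
  have h2' : ((2 : ℕ) : ZMod m) = 0 := by push_cast; exact h
  have := ZMod.val_cast_of_lt (show (2:ℕ) < m by omega)
  rw [h2'] at this
  simp [ZMod.val_zero] at this

lemma neighborSet_eq (m : ℕ) (hm : 3 ≤ m) (c : Fin 4) (u : ZMod 4 × ZMod m) :
    (Fac m c).neighborSet u =
      {((ee.symm (ee u.1 + sel m u.2 (dd c)), u.2 + 1) : ZMod 4 × ZMod m),
       ((ee.symm (ee u.1 + sel m (u.2 - 1) (dd c)), u.2 - 1) : ZMod 4 × ZMod m)} := by
  haveI : NeZero m := ⟨by omega⟩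
  have cancel : ∀ a p : A4, a + p + p = a := by
    intro a p
    have : ∀ a p : A4, a + p + p = a + (p + p) := by intros; abel
    rw [this, addself, add_zero]
  ext w
  simp only [SimpleGraph.mem_neighborSet, Fac, fromRel_adj, Set.mem_insert_iff,
    Set.mem_singleton_iff]
  constructor
  · rintro ⟨hne, h | h⟩
    · left
      have hw2 : w.2 = u.2 + 1 := by rw [← h.1]; ring
      have hw1 : w.1 = ee.symm (ee u.1 + sel m u.2 (dd c)) := by
        rw [← h.2, Equiv.symm_apply_apply]
      exact Prod.ext hw1 hw2
    · right
      have hw2 : w.2 = u.2 - 1 := by rw [← h.1]; ring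
      have hw1 : w.1 = ee.symm (ee u.1 + sel m (u.2 - 1) (dd c)) := by
        rw [← hw2, h.2, cancel, Equiv.symm_apply_apply]
      exact Prod.ext hw1 hw2
  · rintro (rfl | rfl)
    · refine ⟨?_, Or.inl ⟨by ring, by rw [Equiv.apply_symm_apply]⟩⟩
      intro hc
      have := congrArg Prod.snd hc
      simp only at this
      exact zmod_one_ne_zero m hm (by linear_combination -this)
    · refine ⟨?_, Or.inr ⟨by ring, by rw [Equiv.apply_symm_apply, cancel]⟩⟩
      intro hc
      have := congrArg Prod.snd hc
      simp only at this
      exact zmod_one_ne_zero m hm (by linear_combination this)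

lemma neighbor_ncard (m : ℕ) (hm : 3 ≤ m) (c : Fin 4) (u : ZMod 4 × ZMod m) :
    ((Fac m c).neighborSet u).ncard = 2 := by
  rw [neighborSet_eq m hm c u]
  apply Set.ncard_pair
  intro hc
  have := congrArg Prod.snd hc
  simp only at this
  exact zmod_two_ne_zero m hm (by linear_combination this)

lemma supp_ncard (m : ℕ) (hm : 3 ≤ m) (c : Fin 4) (v : ZMod 4 × ZMod m) :
    ((Fac m c).connectedComponentMk v).supp.ncard = m := by
  haveI : NeZero m := ⟨by omega⟩
  rw [supp_eq m hm c v]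
  rw [Set.ncard_image_of_injective _ (fun a b hab => congrArg Prod.snd hab)]
  rw [Set.ncard_univ, Nat.card_eq_fintype_card, ZMod.card]

lemma Fac_disj (m : ℕ) (hm : 3 ≤ m) {c c' : Fin 4} (h : c ≠ c') :
    Fac m c ⊓ Fac m c' = ⊥ := by
  ext u v
  simp only [inf_adj, bot_adj, iff_false]
  rintro ⟨⟨hne, h1⟩, ⟨-, h2⟩⟩
  have hsame : ∀ (w z : ZMod 4 × ZMod m),
      (z.2 - w.2 = 1 ∧ ee z.1 = ee w.1 + sel m w.2 (dd c)) →
      (z.2 - w.2 = 1 ∧ ee z.1 = ee w.1 + sel m w.2 (dd c')) → False := by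
    rintro w z ⟨-, e1⟩ ⟨-, e2⟩
    rw [e1] at e2
    have := add_left_cancel e2
    exact h (dd_inj ((sel m w.2).injective this))
  have hmix : ∀ (w z : ZMod 4 × ZMod m),
      (z.2 - w.2 = 1) → (w.2 - z.2 = 1) → False := by
    intro w z a b
    exact zmod_two_ne_zero m hm (by linear_combination -a-b)
  rcases h1 with h1 | h1 <;> rcases h2 with h2 | h2
  · exact hsame u v h1 h2
  · exact hmix u v h1.1 h2.1
  · exact hmix v u h1.1 h2.1
  · exact hsame v u h1 h2

lemma Fac_sup (m : ℕ) (hm : 3 ≤ m) : (⨆ c, Fac m c) = Cm4 m := by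
  ext u v
  rw [iSup_adj]
  constructor
  · rintro ⟨c, hc⟩
    exact Fac_le m c hc
  · intro h
    obtain ⟨hne, hrel⟩ := h
    rcases hrel with hr | hr
    · obtain ⟨c, hc⟩ := dd_surj ((sel m u.2).symm (ee v.1 - ee u.1))
      refine ⟨c, hne, Or.inl ⟨hr, ?_⟩⟩
      rw [hc, Equiv.apply_symm_apply]
      abel
    · obtain ⟨c, hc⟩ := dd_surj ((sel m v.2).symm (ee u.1 - ee v.1))
      refine ⟨c, hne, Or.inr ⟨hr, ?_⟩⟩
      rw [hc, Equiv.apply_symm_apply]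
      abel

/-- For every `m ≥ 3`, `C_m[4]` has a 2-factorization into four `C_m`-factors. -/
theorem stmt_2 (m : ℕ) (hm : 3 ≤ m) :
    ∃ F : Fin 4 → SimpleGraph (ZMod 4 × ZMod m),
      IsDecompositionF (Cm4 m) F ∧ ∀ i, IsCnFactor (Cm4 m) (F i) m := by
  refine ⟨Fac m, ⟨fun c => Fac_le m c, fun i j hij => Fac_disj m hm hij, Fac_sup m hm⟩,
    fun i => ⟨Fac_le m i, fun v => neighbor_ncard m hm i v, fun v => supp_ncard m hm i v⟩⟩
end

section
/- For every odd integer m ≥ 3, the graph C_m[4] admits no 2-factorization consisting of one C_4-factor and three C_m-factors. That is, one cannot partition the edges of C_m[4] into three spanning subgraphs each a disjoint union of four m-cycles together with one spanning subgraph that is a disjoint union of m 4-cycles. -/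
open SimpleGraph

attribute [local instance] Classical.propDecidable

section Aux
open Finset
variable {m : ℕ} [NeZero m]

lemma myTwoNZ (hm : 3 ≤ m) : (2 : ZMod m) ≠ 0 := by
  intro h
  have : ((2 : ℕ) : ZMod m) = 0 := by exact_mod_cast h
  have := (ZMod.natCast_eq_zero_iff 2 m).1 this
  have := Nat.le_of_dvd (by norm_num) this
  omega

lemma myOneNZ (hm : 3 ≤ m) : (1 : ZMod m) ≠ 0 := by
  intro h
  have : ((1 : ℕ) : ZMod m) = 0 := by exact_mod_cast h
  have := (ZMod.natCast_eq_zero_iff 1 m).1 this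
  have := Nat.le_of_dvd (by norm_num) this
  omega

lemma adj_cm4 (hm : 3 ≤ m) (v w : ZMod 4 × ZMod m) :
    (Cm4 m).Adj v w ↔ (w.2 = v.2 + 1 ∨ v.2 = w.2 + 1) := by
  rw [Cm4, SimpleGraph.fromRel_adj]
  constructor
  · rintro ⟨-, h | h⟩
    · exact Or.inl (by linear_combination h)
    · exact Or.inr (by linear_combination h)
  · intro h
    refine ⟨?_, by rcases h with h | h; exacts [Or.inl (by rw [h]; ring), Or.inr (by rw [h]; ring)]⟩
    rintro rfl
    rcases h with h | h <;>
    · exact myOneNZ hm (by linear_combination -h)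

lemma not_both (hm : 3 ≤ m) {v w : ZMod 4 × ZMod m} (h1 : w.2 = v.2 + 1) (h2 : v.2 = w.2 + 1) :
    False := by
  apply myTwoNZ hm
  linear_combination -h1 - h2

noncomputable def upd (H : SimpleGraph (ZMod 4 × ZMod m)) (v : ZMod 4 × ZMod m) :
    Finset (ZMod 4 × ZMod m) :=
  Finset.univ.filter (fun w => H.Adj v w ∧ w.2 = v.2 + 1)

noncomputable def dnd (H : SimpleGraph (ZMod 4 × ZMod m)) (v : ZMod 4 × ZMod m) :
    Finset (ZMod 4 × ZMod m) :=
  Finset.univ.filter (fun w => H.Adj v w ∧ v.2 = w.2 + 1)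

noncomputable def lyr (S : Set (ZMod 4 × ZMod m)) (i : ZMod m) : Finset (ZMod 4 × ZMod m) :=
  Finset.univ.filter (fun v => v ∈ S ∧ v.2 = i)

noncomputable def crs (H : SimpleGraph (ZMod 4 × ZMod m)) (S : Set (ZMod 4 × ZMod m))
    (i : ZMod m) : Finset ((ZMod 4 × ZMod m) × (ZMod 4 × ZMod m)) :=
  Finset.univ.filter (fun p => H.Adj p.1 p.2 ∧ p.1 ∈ S ∧ p.1.2 = i ∧ p.2.2 = i + 1)

lemma deg_split (hm : 3 ≤ m) {H : SimpleGraph (ZMod 4 × ZMod m)} (hle : H ≤ Cm4 m)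
    (v : ZMod 4 × ZMod m) (hd : (H.neighborSet v).ncard = 2) :
    (upd H v).card + (dnd H v).card = 2 := by
  have hset : H.neighborSet v = ↑(upd H v) ∪ ↑(dnd H v) := by
    ext w
    simp only [upd, dnd, Finset.coe_filter, Finset.mem_univ, true_and, Set.mem_union,
      Set.mem_setOf_eq, mem_neighborSet]
    constructor
    · intro h
      rcases (adj_cm4 hm v w).1 (hle h) with h' | h'
      · exact Or.inl ⟨h, h'⟩
      · exact Or.inr ⟨h, h'⟩
    · rintro (⟨h, -⟩ | ⟨h, -⟩) <;> exact h
  have hdisj : Disjoint (↑(upd H v) : Set (ZMod 4 × ZMod m)) ↑(dnd H v) := by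
    rw [Set.disjoint_left]
    intro w hw hw'
    simp only [upd, dnd, Finset.coe_filter, Set.mem_setOf_eq] at hw hw'
    exact not_both hm hw.2.2 hw'.2.2
  rw [hset, Set.ncard_union_eq hdisj (Set.toFinite _) (Set.toFinite _),
    Set.ncard_coe_finset, Set.ncard_coe_finset] at hd
  exact hd

lemma crs_card_upd (H : SimpleGraph (ZMod 4 × ZMod m)) (S : Set (ZMod 4 × ZMod m)) (i : ZMod m) :
    (crs H S i).card = ∑ v ∈ lyr S i, (upd H v).card := by
  rw [Finset.card_eq_sum_card_fiberwise (f := Prod.fst) (t := lyr S i) (by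
    intro p hp
    simp only [crs, Finset.mem_coe, Finset.mem_filter, Finset.mem_univ, true_and] at hp
    simp only [lyr, Finset.mem_coe, Finset.mem_filter, Finset.mem_univ, true_and]
    exact ⟨hp.2.1, hp.2.2.1⟩)]
  refine Finset.sum_congr rfl (fun v hv => ?_)
  simp only [lyr, Finset.mem_filter, Finset.mem_univ, true_and] at hv
  refine Finset.card_bij (fun p _ => p.2) ?_ ?_ ?_
  · intro p hp
    simp only [crs, Finset.mem_filter, Finset.mem_univ, true_and] at hp
    obtain ⟨⟨hadj, -, hp1, hp2⟩, hfst⟩ := hp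
    simp only [upd, Finset.mem_filter, Finset.mem_univ, true_and]
    subst hfst
    exact ⟨hadj, by rw [hp2, hv.2]⟩
  · intro p hp q hq h
    simp only [Finset.mem_filter] at hp hq
    exact Prod.ext (hp.2.trans hq.2.symm) h
  · intro w hw
    simp only [upd, Finset.mem_filter, Finset.mem_univ, true_and] at hw
    refine ⟨(v, w), ?_, rfl⟩
    simp only [crs, Finset.mem_filter, Finset.mem_univ, true_and]
    exact ⟨⟨hw.1, hv.1, hv.2, by rw [hw.2, hv.2]⟩, trivial⟩

lemma crs_card_dnd {H : SimpleGraph (ZMod 4 × ZMod m)} {S : Set (ZMod 4 × ZMod m)}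
    (hS : ∀ v ∈ S, ∀ w, H.Adj v w → w ∈ S) (i : ZMod m) :
    (crs H S i).card = ∑ v ∈ lyr S (i + 1), (dnd H v).card := by
  rw [Finset.card_eq_sum_card_fiberwise (f := Prod.snd) (t := lyr S (i + 1)) (by
    intro p hp
    simp only [crs, Finset.mem_coe, Finset.mem_filter, Finset.mem_univ, true_and] at hp
    simp only [lyr, Finset.mem_coe, Finset.mem_filter, Finset.mem_univ, true_and]
    exact ⟨hS _ hp.2.1 _ hp.1, hp.2.2.2⟩)]
  refine Finset.sum_congr rfl (fun v hv => ?_)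
  simp only [lyr, Finset.mem_filter, Finset.mem_univ, true_and] at hv
  refine Finset.card_bij (fun p _ => p.1) ?_ ?_ ?_
  · intro p hp
    simp only [crs, Finset.mem_filter, Finset.mem_univ, true_and] at hp
    obtain ⟨⟨hadj, -, hp1, hp2⟩, hsnd⟩ := hp
    simp only [dnd, Finset.mem_filter, Finset.mem_univ, true_and]
    subst hsnd
    exact ⟨hadj.symm, by rw [hv.2, hp1]⟩
  · intro p hp q hq h
    simp only [Finset.mem_filter] at hp hq
    exact Prod.ext h (hp.2.trans hq.2.symm)
  · intro w hw
    simp only [dnd, Finset.mem_filter, Finset.mem_univ, true_and] at hw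
    refine ⟨(w, v), ?_, rfl⟩
    simp only [crs, Finset.mem_filter, Finset.mem_univ, true_and]
    have hw2 : w.2 = i := by
      have : w.2 + 1 = i + 1 := by rw [← hw.2, hv.2]
      exact add_right_cancel this
    exact ⟨⟨hw.1.symm, hS _ hv.1 _ hw.1, hw2, hv.2⟩, trivial⟩

lemma lyr_sum (S : Set (ZMod 4 × ZMod m)) : ∑ i, (lyr S i).card = S.ncard := by
  rw [Set.ncard_eq_toFinset_card']
  rw [Finset.card_eq_sum_card_fiberwise (f := Prod.snd) (t := Finset.univ)
    (fun x _ => Finset.mem_univ _)]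
  refine (Finset.sum_congr rfl (fun i _ => ?_)).symm
  congr 1
  ext v
  simp [lyr, Set.mem_toFinset]


lemma layer_deg (hm : 3 ≤ m) {H : SimpleGraph (ZMod 4 × ZMod m)} (hle : H ≤ Cm4 m)
    (hreg : ∀ v, (H.neighborSet v).ncard = 2) {S : Set (ZMod 4 × ZMod m)}
    (hS : ∀ v ∈ S, ∀ w, H.Adj v w → w ∈ S) (i : ZMod m) :
    2 * (lyr S i).card = (crs H S (i - 1)).card + (crs H S i).card := by
  have h1 : (crs H S (i - 1)).card = ∑ v ∈ lyr S i, (dnd H v).card := by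
    rw [crs_card_dnd hS (i - 1), sub_add_cancel]
  rw [h1, crs_card_upd, ← Finset.sum_add_distrib]
  have : ∀ v ∈ lyr S i, (dnd H v).card + (upd H v).card = 2 := by
    intro v _
    rw [add_comm]
    exact deg_split hm hle v (hreg v)
  rw [Finset.sum_congr rfl this, Finset.sum_const, smul_eq_mul, mul_comm]

lemma crs_total (hm : 3 ≤ m) {H : SimpleGraph (ZMod 4 × ZMod m)} (hle : H ≤ Cm4 m)
    (hreg : ∀ v, (H.neighborSet v).ncard = 2) {S : Set (ZMod 4 × ZMod m)}
    (hS : ∀ v ∈ S, ∀ w, H.Adj v w → w ∈ S) :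
    ∑ i, (crs H S i).card = S.ncard := by
  have h1 : ∑ i, 2 * (lyr S i).card = ∑ i, ((crs H S (i - 1)).card + (crs H S i).card) :=
    Finset.sum_congr rfl (fun i _ => layer_deg hm hle hreg hS i)
  rw [Finset.sum_add_distrib] at h1
  have h2 : ∑ i : ZMod m, (crs H S (i - 1)).card = ∑ i : ZMod m, (crs H S i).card :=
    Fintype.sum_equiv (Equiv.subRight (1 : ZMod m)) _ _ (fun i => rfl)
  rw [h2, ← Finset.mul_sum, lyr_sum] at h1
  omega

lemma parity_const {e : ZMod m → ℕ} (hstep : ∀ i, e i % 2 = e (i + 1) % 2) (i : ZMod m) :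
    e i % 2 = e 0 % 2 := by
  have key : ∀ k : ℕ, e (k : ZMod m) % 2 = e 0 % 2 := by
    intro k
    induction k with
    | zero => simp
    | succ n ih => rw [Nat.cast_succ, ← hstep (n : ZMod m)]; exact ih
  have := key i.val
  rwa [ZMod.natCast_rightInverse i] at this

lemma supp_closed {H : SimpleGraph (ZMod 4 × ZMod m)} (C : H.ConnectedComponent) :
    ∀ v ∈ C.supp, ∀ w, H.Adj v w → w ∈ C.supp := by
  intro v hv w hadj
  rw [SimpleGraph.ConnectedComponent.mem_supp_iff] at hv ⊢
  rw [← hv]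
  exact (SimpleGraph.ConnectedComponent.connectedComponentMk_eq_of_adj hadj).symm

lemma cm_factor_deg (hm : 3 ≤ m) (hmo : Odd m) {H : SimpleGraph (ZMod 4 × ZMod m)}
    (hle : H ≤ Cm4 m) (hreg : ∀ v, (H.neighborSet v).ncard = 2)
    (hcomp : ∀ v, (H.connectedComponentMk v).supp.ncard = m)
    (v : ZMod 4 × ZMod m) : (upd H v).card = 1 ∧ (dnd H v).card = 1 := by
  set S : Set (ZMod 4 × ZMod m) := (H.connectedComponentMk v).supp with hSdef
  have hS : ∀ x ∈ S, ∀ w, H.Adj x w → w ∈ S := supp_closed _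
  set e : ZMod m → ℕ := fun i => (crs H S i).card with he
  have hsum : ∑ i, e i = m := by rw [he]; rw [crs_total hm hle hreg hS]; exact hcomp v
  have hld : ∀ i, 2 * (lyr S i).card = e (i - 1) + e i := fun i => layer_deg hm hle hreg hS i
  have hstep : ∀ i, e i % 2 = e (i + 1) % 2 := by
    intro i
    have := hld (i + 1)
    rw [add_sub_cancel_right] at this
    omega
  have hpar : ∀ i, e i % 2 = e 0 % 2 := parity_const hstep
  have hodd : e 0 % 2 = 1 := by
    by_contra h
    have h0 : e 0 % 2 = 0 := by omega
    have : (2 : ℕ) ∣ ∑ i, e i := Finset.dvd_sum (fun i _ => by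
      have := hpar i; omega)
    rw [hsum] at this
    rw [Nat.odd_iff] at hmo
    omega
  have hone : ∀ i : ZMod m, 1 ≤ e i := by
    intro i
    have := hpar i
    omega
  have hcard : (Finset.univ : Finset (ZMod m)).card = m := by
    rw [Finset.card_univ, ZMod.card]
  have heq1 : ∀ i : ZMod m, e i = 1 := by
    have hs1 : ∑ _i : ZMod m, 1 = m := by rw [Finset.sum_const, smul_eq_mul, mul_one, hcard]
    have := (Finset.sum_eq_sum_iff_of_le (fun i _ => hone i)).1 (by rw [hsum, hs1])
    exact fun i => ((this i (Finset.mem_univ i))).symm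
  have hn1 : ∀ i, (lyr S i).card = 1 := by
    intro i
    have := hld i
    rw [heq1, heq1] at this
    omega
  have hvS : v ∈ S := by rw [hSdef, SimpleGraph.ConnectedComponent.mem_supp_iff]
  have hvlyr : v ∈ lyr S v.2 := by simp [lyr, hvS]
  have hsingle : lyr S v.2 = {v} := by
    obtain ⟨a, ha⟩ := Finset.card_eq_one.1 (hn1 v.2)
    rw [ha] at hvlyr ⊢
    rw [Finset.mem_singleton] at hvlyr
    rw [hvlyr]
  constructor
  · have := crs_card_upd H S v.2
    rw [hsingle, Finset.sum_singleton] at this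
    rw [← this]; exact heq1 v.2
  · have := crs_card_dnd hS (v.2 - 1)
    rw [sub_add_cancel, hsingle, Finset.sum_singleton] at this
    rw [← this]; exact heq1 (v.2 - 1)


lemma zmod_fun_const {f : ZMod m → ℕ} (h : ∀ i, f i = f (i + 1)) (i : ZMod m) : f i = f 0 := by
  have key : ∀ k : ℕ, f (k : ZMod m) = f 0 := by
    intro k
    induction k with
    | zero => simp
    | succ n ih => rw [Nat.cast_succ, ← h (n : ZMod m)]; exact ih
  have := key i.val
  rwa [ZMod.natCast_rightInverse i] at this

lemma upd_G_card (hm : 3 ≤ m) (v : ZMod 4 × ZMod m) :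
    (upd (Cm4 m) v).card = 4 ∧ (dnd (Cm4 m) v).card = 4 := by
  have hcard4 : (Finset.univ : Finset (ZMod 4)).card = 4 := by
    rw [Finset.card_univ, ZMod.card]
  constructor
  · have : upd (Cm4 m) v = (Finset.univ : Finset (ZMod 4)) ×ˢ {v.2 + 1} := by
      ext w
      simp only [upd, Finset.mem_filter, Finset.mem_univ, true_and, Finset.mem_product,
        Finset.mem_singleton]
      constructor
      · rintro ⟨-, h⟩; exact h
      · intro h; exact ⟨(adj_cm4 hm v w).2 (Or.inl h), h⟩
    rw [this, Finset.card_product, Finset.card_singleton, hcard4]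
  · have : dnd (Cm4 m) v = (Finset.univ : Finset (ZMod 4)) ×ˢ {v.2 - 1} := by
      ext w
      simp only [dnd, Finset.mem_filter, Finset.mem_univ, true_and, Finset.mem_product,
        Finset.mem_singleton]
      constructor
      · rintro ⟨-, h⟩; rw [h]; ring
      · intro h
        have h' : v.2 = w.2 + 1 := by rw [h]; ring
        exact ⟨(adj_cm4 hm v w).2 (Or.inr h'), h'⟩
    rw [this, Finset.card_product, Finset.card_singleton, hcard4]

lemma decomp_sum (F : Fin 4 → SimpleGraph (ZMod 4 × ZMod m))
    (hdisj : ∀ i j, i ≠ j → F i ⊓ F j = ⊥) (hsup : (⨆ i, F i) = Cm4 m)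
    (v : ZMod 4 × ZMod m) :
    ∑ t : Fin 4, (upd (F t) v).card = (upd (Cm4 m) v).card ∧
    ∑ t : Fin 4, (dnd (F t) v).card = (dnd (Cm4 m) v).card := by
  have hadj : ∀ w, (Cm4 m).Adj v w ↔ ∃ t, (F t).Adj v w := by
    intro w; rw [← hsup]; exact SimpleGraph.iSup_adj
  have hdisj' : ∀ (s t : Fin 4), s ≠ t → ∀ w, ¬((F s).Adj v w ∧ (F t).Adj v w) := by
    intro s t hst w ⟨h1, h2⟩
    have : (F s ⊓ F t).Adj v w := ⟨h1, h2⟩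
    rw [hdisj s t hst] at this
    simp at this
  constructor
  · have hbu : upd (Cm4 m) v = Finset.univ.biUnion (fun t : Fin 4 => upd (F t) v) := by
      ext w
      simp only [upd, Finset.mem_filter, Finset.mem_univ, true_and, Finset.mem_biUnion]
      rw [hadj w]
      constructor
      · rintro ⟨⟨t, ht⟩, h⟩; exact ⟨t, ht, h⟩
      · rintro ⟨t, ht, h⟩; exact ⟨⟨t, ht⟩, h⟩
    rw [hbu, Finset.card_biUnion]
    intro s _ t _ hst
    rw [Function.onFun, Finset.disjoint_left]
    intro w hw hw'
    simp only [upd, Finset.mem_filter] at hw hw'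
    exact hdisj' s t hst w ⟨hw.2.1, hw'.2.1⟩
  · have hbu : dnd (Cm4 m) v = Finset.univ.biUnion (fun t : Fin 4 => dnd (F t) v) := by
      ext w
      simp only [dnd, Finset.mem_filter, Finset.mem_univ, true_and, Finset.mem_biUnion]
      rw [hadj w]
      constructor
      · rintro ⟨⟨t, ht⟩, h⟩; exact ⟨t, ht, h⟩
      · rintro ⟨t, ht, h⟩; exact ⟨⟨t, ht⟩, h⟩
    rw [hbu, Finset.card_biUnion]
    intro s _ t _ hst
    rw [Function.onFun, Finset.disjoint_left]
    intro w hw hw'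
    simp only [dnd, Finset.mem_filter] at hw hw'
    exact hdisj' s t hst w ⟨hw.2.1, hw'.2.1⟩

end Aux


/-- For odd `m ≥ 3`, `C_m[4]` has no 2-factorization into one `C_4`-factor and
three `C_m`-factors. -/
theorem stmt_4 (m : ℕ) (hm : 3 ≤ m) (hmo : Odd m) :
    ¬ ∃ F : Fin 4 → SimpleGraph (ZMod 4 × ZMod m),
        IsDecompositionF (Cm4 m) F ∧
        IsCnFactor (Cm4 m) (F 0) 4 ∧
        IsCnFactor (Cm4 m) (F 1) m ∧ IsCnFactor (Cm4 m) (F 2) m ∧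
        IsCnFactor (Cm4 m) (F 3) m := by
  haveI : NeZero m := ⟨by omega⟩
  rintro ⟨F, ⟨hle, hdisj, hsup⟩, h0, h1, h2, h3⟩
  -- each C_m-factor has one up and one down edge at every vertex
  have hu1 := cm_factor_deg hm hmo h1.1 h1.2.1 h1.2.2
  have hu2 := cm_factor_deg hm hmo h2.1 h2.2.1 h2.2.2
  have hu3 := cm_factor_deg hm hmo h3.1 h3.2.1 h3.2.2
  -- hence so does the C_4-factor
  have h0deg : ∀ v, (upd (F 0) v).card = 1 ∧ (dnd (F 0) v).card = 1 := by
    intro v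
    obtain ⟨hsu, hsd⟩ := decomp_sum F hdisj hsup v
    obtain ⟨hgu, hgd⟩ := upd_G_card (m := m) hm v
    rw [hgu, Fin.sum_univ_four] at hsu
    rw [hgd, Fin.sum_univ_four] at hsd
    rw [(hu1 v).1] at hsu; rw [(hu2 v).1] at hsu; rw [(hu3 v).1] at hsu
    rw [(hu1 v).2] at hsd; rw [(hu2 v).2] at hsd; rw [(hu3 v).2] at hsd
    omega
  -- analyze a component of the C_4-factor
  set v₀ : ZMod 4 × ZMod m := (0, 0) with hv₀
  set S : Set (ZMod 4 × ZMod m) := ((F 0).connectedComponentMk v₀).supp with hSdef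
  have hS : ∀ x ∈ S, ∀ w, (F 0).Adj x w → w ∈ S := supp_closed _
  have hS4 : S.ncard = 4 := h0.2.2 v₀
  have hupdn : ∀ i, (crs (F 0) S i).card = (lyr S i).card := by
    intro i
    rw [crs_card_upd]
    rw [Finset.sum_congr rfl (fun w _ => (h0deg w).1), Finset.sum_const, smul_eq_mul, mul_one]
  have hdndn : ∀ i, (crs (F 0) S i).card = (lyr S (i + 1)).card := by
    intro i
    rw [crs_card_dnd hS]
    rw [Finset.sum_congr rfl (fun w _ => (h0deg w).2), Finset.sum_const, smul_eq_mul, mul_one]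
  have hstep : ∀ i, (lyr S i).card = (lyr S (i + 1)).card := by
    intro i; rw [← hupdn i, hdndn i]
  have hconst : ∀ i, (lyr S i).card = (lyr S 0).card :=
    zmod_fun_const hstep
  have htot : m * (lyr S 0).card = 4 := by
    have := lyr_sum S
    rw [hS4] at this
    rw [Finset.sum_congr rfl (fun i _ => hconst i), Finset.sum_const, smul_eq_mul,
      Finset.card_univ, ZMod.card] at this
    exact this
  have hpos : 1 ≤ (lyr S 0).card := by
    refine Finset.card_pos.2 ⟨v₀, ?_⟩
    simp only [lyr, Finset.mem_filter, Finset.mem_univ, true_and]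
    exact ⟨by rw [hSdef, SimpleGraph.ConnectedComponent.mem_supp_iff], rfl⟩
  have hle4 : m ≤ 4 := by
    calc m = m * 1 := (mul_one m).symm
    _ ≤ m * (lyr S 0).card := Nat.mul_le_mul_left m hpos
    _ = 4 := htot
  rw [Nat.odd_iff] at hmo
  have hm3 : m = 3 := by omega
  have hdvd : m ∣ 4 := ⟨(lyr S 0).card, htot.symm⟩
  rw [hm3] at hdvd
  norm_num at hdvd
end
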